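/- Let V be a finite set of flip identifiers and w : V → ℝ with 0 ≤ w v ≤ 1. Define the product measure μ on (V → Bool) where coordinate v is Bernoulli(w v). Let i, j ∈ V with i ≠ j and w i = w j, and let f : (V → Bool) → α be a function such that for every assignment σ, f σ does not depend on σ j whenever a predicate P i σ holds, and does not depend on σ i whenever ¬ P i σ holds (i.e. the two flips are never both read, for some path-condition predicate P i not depending on coordinates i and j). Define the hoisted function f' on (V \ {j} → Bool) by f' σ = f (σ extended with σ j := σ i). Then the pushforward of μ under f equals the pushforward of the corresponding product measure on (V \ {j} → Bool) under f'. -/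

import Mathlib

open MeasureTheory
open scoped ENNReal

private lemma bern_congr {p q : ℝ≥0∞} (h : p = q) (hp : p.toNNReal ≤ 1) (hq : q.toNNReal ≤ 1) :
    PMF.bernoulli p.toNNReal hp = PMF.bernoulli q.toNNReal hq := by subst h; rfl

/-- abstract Path Redundancy Theorem.  `μ` is the product Bernoulli
measure on assignments `V → Bool` with parameters `w`.  If `i ≠ j`, `w i = w j`,
and `f` never reads coordinate `j` when the path condition `P i` holds and never
reads coordinate `i` when it fails (where `P i` itself does not depend on
coordinates `i` and `j`), then the pushforward of `μ` under `f` equals the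
pushforward under the hoisted function `f'` on `(V \ {j}) → Bool` which extends
an assignment by setting coordinate `j` to the value of coordinate `i`. -/

theorem stmt_5 {V : Type} [Fintype V] [DecidableEq V] {α : Type} [MeasurableSpace α]
    (w : V → ℝ≥0∞) (hw : ∀ v, w v ≤ 1)
    (i j : V) (hij : i ≠ j) (hwij : w i = w j)
    (f : (V → Bool) → α) (hf : Measurable f)
    (P : V → (V → Bool) → Prop)
    (hPi : ∀ σ b, P i (Function.update σ i b) ↔ P i σ)
    (hPj : ∀ σ b, P i (Function.update σ j b) ↔ P i σ)
    (hfj : ∀ σ, P i σ → ∀ b, f (Function.update σ j b) = f σ)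
    (hfi : ∀ σ, ¬ P i σ → ∀ b, f (Function.update σ i b) = f σ) :
    (Measure.pi fun v => (PMF.bernoulli (w v).toNNReal ((ENNReal.toNNReal_mono ENNReal.one_ne_top (hw v)).trans_eq ENNReal.toNNReal_one)).toMeasure).map f =
      (Measure.pi fun v : {v : V // v ≠ j} => (PMF.bernoulli (w v.1).toNNReal ((ENNReal.toNNReal_mono ENNReal.one_ne_top (hw v.1)).trans_eq ENNReal.toNNReal_one)).toMeasure).map
        (fun σ => f fun v => if h : v = j then σ ⟨i, hij⟩ else σ ⟨v, h⟩) := by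
  classical
  set μ : Measure (V → Bool) := Measure.pi fun v => (PMF.bernoulli (w v).toNNReal ((ENNReal.toNNReal_mono ENNReal.one_ne_top (hw v)).trans_eq ENNReal.toNNReal_one)).toMeasure with hμ
  set ν : Measure ({v : V // v ≠ j} → Bool) :=
    Measure.pi fun v : {v : V // v ≠ j} => (PMF.bernoulli (w v.1).toNNReal ((ENNReal.toNNReal_mono ENNReal.one_ne_top (hw v.1)).trans_eq ENNReal.toNNReal_one)).toMeasure with hν
  set ext : ({v : V // v ≠ j} → Bool) → (V → Bool) :=
    fun σ v => if h : v = j then σ ⟨i, hij⟩ else σ ⟨v, h⟩ with hext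
  set res : (V → Bool) → ({v : V // v ≠ j} → Bool) := fun σ v => σ v.1 with hres
  set S : (V → Bool) → (V → Bool) :=
    fun σ => if P i σ then σ else σ ∘ Equiv.swap i j with hS
  -- swap as double update
  have hswap : ∀ σ : V → Bool, σ ∘ Equiv.swap i j
      = Function.update (Function.update σ i (σ j)) j (σ i) := by
    intro σ
    funext v
    rcases eq_or_ne v i with rfl | hvi
    · simp [Function.update, hij, Equiv.swap_apply_left]
    rcases eq_or_ne v j with rfl | hvj
    · simp [Function.update, Equiv.swap_apply_right]
    · simp [Function.update, hvi, hvj, Equiv.swap_apply_of_ne_of_ne hvi hvj]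
  have hPswap : ∀ σ, P i (σ ∘ Equiv.swap i j) ↔ P i σ := by
    intro σ
    rw [hswap σ, hPj, hPi]
  -- pointwise identity: f = f ∘ ext ∘ res ∘ S
  have hkey : ∀ σ, f σ = f (ext (res (S σ))) := by
    intro σ
    by_cases hP : P i σ
    · have hSσ : S σ = σ := if_pos hP
      rw [hSσ]
      have : ext (res σ) = Function.update σ j (σ i) := by
        funext v
        rcases eq_or_ne v j with rfl | hvj
        · simp [hext, hres, Function.update]
        · simp [hext, hres, Function.update, hvj]
      rw [this, hfj σ hP]
    · have hSσ : S σ = σ ∘ Equiv.swap i j := if_neg hP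
      rw [hSσ]
      have : ext (res (σ ∘ Equiv.swap i j)) = Function.update σ i (σ j) := by
        funext v
        rcases eq_or_ne v j with rfl | hvj
        · simp [hext, hres, Function.update, hij, Equiv.swap_apply_left]
        rcases eq_or_ne v i with rfl | hvi
        · simp [hext, hres, Function.update, hvj, Equiv.swap_apply_left]
        · simp [hext, hres, Function.update, hvj, hvi,
            Equiv.swap_apply_of_ne_of_ne hvi hvj]
      rw [this, hfi σ hP]
  -- measure of singletons
  have hsingle : ∀ σ : V → Bool,
      μ {σ} = ∏ v, (PMF.bernoulli (w v).toNNReal ((ENNReal.toNNReal_mono ENNReal.one_ne_top (hw v)).trans_eq ENNReal.toNNReal_one)).toMeasure {σ v} := by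
    intro σ
    rw [hμ, ← Set.univ_pi_singleton σ, Measure.pi_pi]
  -- S preserves μ
  have hSinv : ∀ σ, S (S σ) = σ := by
    intro σ
    by_cases hP : P i σ
    · simp [hS, hP]
    · have h1 : S σ = σ ∘ Equiv.swap i j := if_neg hP
      have h2 : ¬ P i (S σ) := by rw [h1, hPswap]; exact hP
      have h3 : S (S σ) = S σ ∘ Equiv.swap i j := if_neg h2
      rw [h3, h1]
      funext v
      simp [Function.comp, Equiv.swap_apply_self]
  have hSmeas : Measurable S := measurable_of_countable S
  have hμS : μ.map S = μ := by
    rw [Measure.ext_iff_singleton]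
    intro σ
    rw [Measure.map_apply hSmeas (measurableSet_singleton σ)]
    have : S ⁻¹' {σ} = {S σ} := by
      ext x
      simp only [Set.mem_preimage, Set.mem_singleton_iff]
      constructor
      · intro h; rw [← h, hSinv]
      · intro h; rw [h, hSinv]
    rw [this, hsingle, hsingle]
    by_cases hP : P i σ
    · have : S σ = σ := if_pos hP
      rw [this]
    · have h1 : S σ = σ ∘ Equiv.swap i j := if_neg hP
      rw [h1]
      rw [Fintype.prod_equiv (Equiv.swap i j)
        (fun v => (PMF.bernoulli (w v).toNNReal ((ENNReal.toNNReal_mono ENNReal.one_ne_top (hw v)).trans_eq ENNReal.toNNReal_one)).toMeasure {(σ ∘ Equiv.swap i j) v})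
        (fun v => (PMF.bernoulli (w v).toNNReal ((ENNReal.toNNReal_mono ENNReal.one_ne_top (hw v)).trans_eq ENNReal.toNNReal_one)).toMeasure {σ v})]
      intro v
      have hw' : w (Equiv.swap i j v) = w v := by
        rcases eq_or_ne v i with rfl | hvi
        · rw [Equiv.swap_apply_left]; exact hwij.symm
        rcases eq_or_ne v j with rfl | hvj
        · rw [Equiv.swap_apply_right]; exact hwij
        · rw [Equiv.swap_apply_of_ne_of_ne hvi hvj]
      simp only [Function.comp]
      rw [bern_congr hw' _ _]
  -- marginal: map res μ = ν
  have hresmeas : Measurable res := measurable_of_countable res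
  have hmarg : μ.map res = ν := by
    have hmp := measurePreserving_piEquivPiSubtypeProd
      (fun v : V => (PMF.bernoulli (w v).toNNReal ((ENNReal.toNNReal_mono ENNReal.one_ne_top (hw v)).trans_eq ENNReal.toNNReal_one)).toMeasure) (fun v => v ≠ j)
    have hcomp : res = Prod.fst ∘ (MeasurableEquiv.piEquivPiSubtypeProd (fun _ : V => Bool)
        (fun v => v ≠ j)) := by
      funext σ; rfl
    rw [hcomp, ← Measure.map_map measurable_fst (MeasurableEquiv.measurable _), hmp.map_eq]
    rw [Measure.map_fst_prod]
    have : (Measure.pi fun v : {v : V // ¬ v ≠ j} =>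
        (PMF.bernoulli (w v.1).toNNReal ((ENNReal.toNNReal_mono ENNReal.one_ne_top (hw v.1)).trans_eq ENNReal.toNNReal_one)).toMeasure) Set.univ = 1 := measure_univ
    rw [this, one_smul, hν]
  -- put it together
  have hfun : f = (f ∘ ext) ∘ res ∘ S := by
    funext σ; exact hkey σ
  have hfext : Measurable (f ∘ ext) := measurable_of_countable _
  calc μ.map f = μ.map ((f ∘ ext) ∘ res ∘ S) := by rw [← hfun]
    _ = ((μ.map S).map res).map (f ∘ ext) := by
        rw [Measure.map_map hresmeas hSmeas, Measure.map_map hfext (hresmeas.comp hSmeas)]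
    _ = ν.map (f ∘ ext) := by rw [hμS, hmarg]
    _ = _ := rfl
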